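/- A finite set system (X, F) is well-graded if and only if for every A, B ∈ F with |A △ B| ≥ 2 there exists C ∈ F with C ≠ A, C ≠ B, and A ∩ B ⊆ C ⊆ A ∪ B (equivalently C △ A ⊊ A △ B and C △ B ⊊ A △ B). -/

import Mathlib

/-- The one-inclusion graph of a set system. -/
def oneInclusion {α : Type*} [DecidableEq α] (F : Finset (Finset α)) :
    SimpleGraph {A : Finset α // A ∈ F} where
  Adj A B := (symmDiff A.1 B.1).card = 1
  symm := by
    constructor
    intro A B h
    rwa [symmDiff_comm] at h
  loopless := by
    constructor
    intro A h
    simp [symmDiff_self] at h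

/-- A set system is well-graded if the Hamming distance between any two members
equals their distance in the one-inclusion graph. -/
def WellGraded {α : Type*} [DecidableEq α] (F : Finset (Finset α)) : Prop :=
  ∀ A B : {A : Finset α // A ∈ F},
    (oneInclusion F).dist A B = (symmDiff A.1 B.1).card

lemma hamming_triangle {α : Type*} [DecidableEq α] (A B C : Finset α) :
    (symmDiff A C).card ≤ (symmDiff A B).card + (symmDiff B C).card := by
  calc (symmDiff A C).card ≤ (symmDiff A B ∪ symmDiff B C).card :=
        Finset.card_le_card (symmDiff_triangle A B C)
    _ ≤ _ := Finset.card_union_le _ _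

lemma hamming_le_walk_length {α : Type*} [DecidableEq α] {F : Finset (Finset α)}
    {A B : {A : Finset α // A ∈ F}} (p : (oneInclusion F).Walk A B) :
    (symmDiff A.1 B.1).card ≤ p.length := by
  induction p with
  | nil => simp
  | @cons u v w h q ih =>
      have := hamming_triangle u.1 v.1 w.1
      have hadj : (symmDiff u.1 v.1).card = 1 := h
      simp only [SimpleGraph.Walk.length_cons]
      omega

lemma exists_walk_le {α : Type*} [DecidableEq α] {F : Finset (Finset α)}
    (H : ∀ A ∈ F, ∀ B ∈ F, 2 ≤ (symmDiff A B).card →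
        ∃ C ∈ F, C ≠ A ∧ C ≠ B ∧ A ∩ B ⊆ C ∧ C ⊆ A ∪ B) :
    ∀ (n : ℕ) (A B : {A : Finset α // A ∈ F}), (symmDiff A.1 B.1).card = n →
      ∃ p : (oneInclusion F).Walk A B, p.length ≤ n := by
  intro n
  induction n using Nat.strong_induction_on with
  | _ n ih =>
    intro A B hn
    match n, hn with
    | 0, hn =>
        have : A = B := by
          apply Subtype.ext
          exact symmDiff_eq_bot.mp (Finset.card_eq_zero.mp hn)
        subst this
        exact ⟨SimpleGraph.Walk.nil, by simp⟩
    | 1, hn =>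
        exact ⟨SimpleGraph.Walk.cons (hn : (oneInclusion F).Adj A B)
          SimpleGraph.Walk.nil, le_refl _⟩
    | (m+2), hn =>
        obtain ⟨C, hCF, hCA, hCB, hsub1, hsub2⟩ :=
          H A.1 A.2 B.1 B.2 (by omega)
        set c : {A : Finset α // A ∈ F} := ⟨C, hCF⟩
        -- symmDiff A C and symmDiff C B partition symmDiff A B
        have hdisj : Disjoint (symmDiff A.1 C) (symmDiff C B.1) := by
          rw [Finset.disjoint_left]
          intro x hx hx'
          rw [Finset.mem_symmDiff] at hx hx'
          have h1 : x ∈ A.1 ∩ B.1 → x ∈ C := fun h => hsub1 h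
          have h2 : x ∈ C → x ∈ A.1 ∪ B.1 := fun h => hsub2 h
          simp only [Finset.mem_inter, Finset.mem_union] at h1 h2
          tauto
        have hunion : symmDiff A.1 C ∪ symmDiff C B.1 = symmDiff A.1 B.1 := by
          ext x
          simp only [Finset.mem_union, Finset.mem_symmDiff]
          have h1 : x ∈ A.1 ∩ B.1 → x ∈ C := fun h => hsub1 h
          have h2 : x ∈ C → x ∈ A.1 ∪ B.1 := fun h => hsub2 h
          simp only [Finset.mem_inter, Finset.mem_union] at h1 h2
          tauto
        have hcard : (symmDiff A.1 C).card + (symmDiff C B.1).card = m + 2 := by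
          rw [← Finset.card_union_of_disjoint hdisj, hunion, hn]
        have hpos1 : 0 < (symmDiff A.1 C).card := by
          rw [Finset.card_pos, Finset.nonempty_iff_ne_empty]
          intro h
          exact hCA (symmDiff_eq_bot.mp h).symm
        have hpos2 : 0 < (symmDiff C B.1).card := by
          rw [Finset.card_pos, Finset.nonempty_iff_ne_empty]
          intro h
          exact hCB (symmDiff_eq_bot.mp h)
        obtain ⟨p, hp⟩ := ih (symmDiff A.1 C).card (by omega) A c rfl
        obtain ⟨q, hq⟩ := ih (symmDiff C B.1).card (by omega) c B rfl
        exact ⟨p.append q, by rw [SimpleGraph.Walk.length_append]; omega⟩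

/-- A finite set system is well-graded iff for every `A, B ∈ F` with
`|A △ B| ≥ 2` there is `C ∈ F`, different from `A` and `B`, with
`A ∩ B ⊆ C ⊆ A ∪ B`. -/
theorem wellGraded_iff {α : Type*} [DecidableEq α]
    (F : Finset (Finset α)) (hF : F.Nonempty) :
    WellGraded F ↔
      ∀ A ∈ F, ∀ B ∈ F, 2 ≤ (symmDiff A B).card →
        ∃ C ∈ F, C ≠ A ∧ C ≠ B ∧ A ∩ B ⊆ C ∧ C ⊆ A ∪ B := by
  constructor
  · intro H A hA B hB hcard
    set a : {A : Finset α // A ∈ F} := ⟨A, hA⟩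
    set b : {A : Finset α // A ∈ F} := ⟨B, hB⟩
    have hd : (oneInclusion F).dist a b = (symmDiff A B).card := H a b
    have hdne : (oneInclusion F).dist a b ≠ 0 := by omega
    obtain ⟨p, hp⟩ := SimpleGraph.exists_walk_of_dist_ne_zero hdne
    have hab : a ≠ b := by
      intro h
      rw [h] at hd
      simp [SimpleGraph.dist_self] at hd
      omega
    obtain ⟨c, hadj, q, rfl⟩ := SimpleGraph.Walk.exists_eq_cons_of_ne hab p
    have hadj' : (symmDiff A c.1).card = 1 := hadj
    have hqlen : q.length = (symmDiff A B).card - 1 := by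
      simp only [SimpleGraph.Walk.length_cons] at hp
      omega
    have hcb_le : (oneInclusion F).dist c b ≤ (symmDiff A B).card - 1 := by
      rw [← hqlen]; exact SimpleGraph.dist_le q
    have hcb : (symmDiff c.1 B).card ≤ (symmDiff A B).card - 1 := by
      rw [← H c b]; exact hcb_le
    have htri := hamming_triangle A c.1 B
    have hcb' : (symmDiff c.1 B).card = (symmDiff A B).card - 1 := by omega
    -- extract the singleton
    obtain ⟨x, hx⟩ := Finset.card_eq_one.mp hadj'
    have hxAB : x ∈ symmDiff A B := by
      by_contra hxnot
      have : symmDiff A B ⊆ symmDiff c.1 B := by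
        intro y hy
        have h1 : y ∉ symmDiff A c.1 := by
          rw [hx, Finset.mem_singleton]; rintro rfl; exact hxnot hy
        rw [Finset.mem_symmDiff] at *
        tauto
      have := Finset.card_le_card this
      omega
    refine ⟨c.1, c.2, ?_, ?_, ?_, ?_⟩
    · intro h
      rw [← h] at hadj'
      simp [symmDiff_self] at hadj'
    · intro h
      rw [h] at hcb'
      simp [symmDiff_self] at hcb'
      omega
    · intro y hy
      have hyAB : y ∉ symmDiff A B := by
        rw [Finset.mem_symmDiff]
        rw [Finset.mem_inter] at hy
        tauto
      have hyx : y ≠ x := fun h => hyAB (h ▸ hxAB)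
      have h1 : y ∉ symmDiff A c.1 := by
        rw [hx, Finset.mem_singleton]; exact hyx
      rw [Finset.mem_symmDiff] at h1
      rw [Finset.mem_inter] at hy
      push_neg at h1
      tauto
    · intro y hy
      by_cases hyA : y ∈ A
      · exact Finset.mem_union_left _ hyA
      · have h1 : y ∈ symmDiff A c.1 := by
          rw [Finset.mem_symmDiff]; tauto
        rw [hx, Finset.mem_singleton] at h1
        subst h1
        rw [Finset.mem_symmDiff] at hxAB
        rcases hxAB with h | h
        · exact absurd h.1 hyA
        · exact Finset.mem_union_right _ h.1
  · intro H a b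
    obtain ⟨p, hp⟩ := exists_walk_le H (symmDiff a.1 b.1).card a b rfl
    have h1 : (oneInclusion F).dist a b ≤ (symmDiff a.1 b.1).card :=
      le_trans (SimpleGraph.dist_le p) hp
    have h2 : (symmDiff a.1 b.1).card ≤ (oneInclusion F).dist a b := by
      by_cases hab : a = b
      · subst hab; simp [symmDiff_self]
      · have hr : (oneInclusion F).Reachable a b := ⟨p⟩
        obtain ⟨q, hq⟩ := hr.exists_walk_length_eq_dist
        rw [← hq]
        exact hamming_le_walk_length q
    omega
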